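/- Let L be a finite lattice, π a dual atom of Con L, and p, q prime intervals of L with π not collapsing p and not collapsing q. Then con(p) ≤ con(q) or con(q) ≤ con(p), where con(r) denotes the smallest congruence collapsing the prime interval r. -/

import Mathlib

/-- A finite lattice is planar iff its order dimension is at most 2
(Baker–Fishburn–Roberts): the order is the intersection of two linear orders. -/
def IsPlanarLattice (L : Type*) [Lattice L] : Prop :=
  ∃ r₁ r₂ : L → L → Prop, IsLinearOrder L r₁ ∧ IsLinearOrder L r₂ ∧
    ∀ a b : L, a ≤ b ↔ r₁ a b ∧ r₂ a b

/-- Semimodularity: `a ⊓ b ⋖ a` implies `b ⋖ a ⊔ b`. -/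
def IsSemimodular (L : Type*) [Lattice L] : Prop :=
  ∀ a b : L, a ⊓ b ⋖ a → b ⋖ a ⊔ b

/-- A lattice contains a sublattice isomorphic to `M₃` iff it has three distinct
elements with pairwise equal meets and pairwise equal joins. -/
def HasM3Sublattice (L : Type*) [Lattice L] : Prop :=
  ∃ a b c : L, a ≠ b ∧ a ≠ c ∧ b ≠ c ∧
    a ⊓ b = a ⊓ c ∧ a ⊓ c = b ⊓ c ∧ a ⊔ b = a ⊔ c ∧ a ⊔ c = b ⊔ c

/-- A lattice congruence. -/
structure LatticeCongr (L : Type*) [Lattice L] where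
  r : L → L → Prop
  iseqv : Equivalence r
  sup_compat : ∀ {a b c d : L}, r a b → r c d → r (a ⊔ c) (b ⊔ d)
  inf_compat : ∀ {a b c d : L}, r a b → r c d → r (a ⊓ c) (b ⊓ d)

namespace LatticeCongr

variable {L : Type*} [Lattice L]

def toSetoid (α : LatticeCongr L) : Setoid L := ⟨α.r, α.iseqv⟩

/-- The quotient lattice `L/α`. -/
def Quot (α : LatticeCongr L) : Type _ := Quotient α.toSetoid

/-- The quotient map. -/
def mkQ (α : LatticeCongr L) (x : L) : α.Quot := Quotient.mk α.toSetoid x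

instance (α : LatticeCongr L) : Max α.Quot :=
  ⟨Quotient.map₂ (· ⊔ ·) fun _ _ h _ _ h' => α.sup_compat h h'⟩

instance (α : LatticeCongr L) : Min α.Quot :=
  ⟨Quotient.map₂ (· ⊓ ·) fun _ _ h _ _ h' => α.inf_compat h h'⟩

@[simp] theorem mkQ_sup (α : LatticeCongr L) (x y : L) :
    α.mkQ x ⊔ α.mkQ y = α.mkQ (x ⊔ y) := rfl

@[simp] theorem mkQ_inf (α : LatticeCongr L) (x y : L) :
    α.mkQ x ⊓ α.mkQ y = α.mkQ (x ⊓ y) := rfl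

instance (α : LatticeCongr L) : Lattice α.Quot :=
  Lattice.mk'
    (fun a b => Quotient.inductionOn₂ a b fun x y => congrArg _ (sup_comm x y))
    (fun a b c => Quotient.inductionOn₃ a b c fun x y z => congrArg _ (sup_assoc x y z))
    (fun a b => Quotient.inductionOn₂ a b fun x y => congrArg _ (inf_comm x y))
    (fun a b c => Quotient.inductionOn₃ a b c fun x y z => congrArg _ (inf_assoc x y z))
    (fun a b => Quotient.inductionOn₂ a b fun x y => congrArg _ (sup_inf_self (a := x) (b := y)))
    (fun a b => Quotient.inductionOn₂ a b fun x y => congrArg _ (inf_sup_self (a := x) (b := y)))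

theorem ext' {α β : LatticeCongr L} (h : ∀ a b, α.r a b ↔ β.r a b) : α = β := by
  have hr : α.r = β.r := funext fun a => funext fun b => propext (h a b)
  cases α; cases β; cases hr; rfl

instance : PartialOrder (LatticeCongr L) where
  le α β := ∀ ⦃a b : L⦄, α.r a b → β.r a b
  le_refl _ _ _ h := h
  le_trans _ _ _ h h' _ _ hab := h' (h hab)
  le_antisymm _ _ h h' := ext' fun a b => ⟨fun hab => h hab, fun hab => h' hab⟩

instance : OrderTop (LatticeCongr L) where
  top := ⟨fun _ _ => True, ⟨fun _ => trivial, fun _ => trivial, fun _ _ => trivial⟩,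
    fun _ _ => trivial, fun _ _ => trivial⟩
  le_top _ _ _ _ := trivial

instance : OrderBot (LatticeCongr L) where
  bot := ⟨Eq, eq_equivalence, fun h h' => by rw [h, h'], fun h h' => by rw [h, h']⟩
  bot_le _ _ _ h := h ▸ (Equivalence.refl (iseqv _) _)

instance : InfSet (LatticeCongr L) where
  sInf S :=
    ⟨fun a b => ∀ θ ∈ S, θ.r a b,
     ⟨fun _ θ _ => θ.iseqv.refl _,
      fun h θ hθ => θ.iseqv.symm (h θ hθ),
      fun h h' θ hθ => θ.iseqv.trans (h θ hθ) (h' θ hθ)⟩,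
     fun h h' θ hθ => θ.sup_compat (h θ hθ) (h' θ hθ),
     fun h h' θ hθ => θ.inf_compat (h θ hθ) (h' θ hθ)⟩

/-- The principal congruence generated by collapsing the pair `(a, b)`. -/
def conPair (a b : L) : LatticeCongr L := sInf {θ : LatticeCongr L | θ.r a b}

end LatticeCongr

/-- A distributive lattice (as a property). -/
def IsDistribQuot (X : Type*) [Lattice X] : Prop :=
  ∀ x y z : X, x ⊓ (y ⊔ z) = x ⊓ y ⊔ x ⊓ z

/-- A prime ideal of a lattice, as a set. -/
def IsPrimeIdealSet {L : Type*} [Lattice L] (P : Set L) : Prop :=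
  P.Nonempty ∧ P ≠ Set.univ ∧
  (∀ x y : L, x ≤ y → y ∈ P → x ∈ P) ∧
  (∀ x y : L, x ∈ P → y ∈ P → x ⊔ y ∈ P) ∧
  (∀ x y : L, x ⊓ y ∈ P → x ∈ P ∨ y ∈ P)


namespace LatticeCongr

variable {L : Type*} [Lattice L]

/-- One step: related by some congruence not collapsing `(a, b)`. -/
def chainStep (a b : L) (u v : L) : Prop :=
  ∃ σ : LatticeCongr L, ¬ σ.r a b ∧ σ.r u v

/-- The join of all congruences not collapsing `(a, b)`. -/
def chainCon (a b : L) : LatticeCongr L where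
  r := Relation.ReflTransGen (chainStep a b)
  iseqv := by
    refine ⟨fun _ => .refl, fun h => ?_, fun h h' => h.trans h'⟩
    haveI : Std.Symm (chainStep a b) := ⟨fun u v ⟨σ, hσ, huv⟩ => ⟨σ, hσ, σ.iseqv.symm huv⟩⟩
    exact Std.Symm.symm _ _ h
  sup_compat := by
    intro x y u v h h'
    have l1 : Relation.ReflTransGen (chainStep a b) (x ⊔ u) (y ⊔ u) :=
      Relation.ReflTransGen.lift (· ⊔ u)
        (fun p q ⟨σ, hσ, hpq⟩ => ⟨σ, hσ, σ.sup_compat hpq (σ.iseqv.refl u)⟩) _ _ h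
    have l2 : Relation.ReflTransGen (chainStep a b) (y ⊔ u) (y ⊔ v) :=
      Relation.ReflTransGen.lift (y ⊔ ·)
        (fun p q ⟨σ, hσ, hpq⟩ => ⟨σ, hσ, σ.sup_compat (σ.iseqv.refl y) hpq⟩) _ _ h'
    exact l1.trans l2
  inf_compat := by
    intro x y u v h h'
    have l1 : Relation.ReflTransGen (chainStep a b) (x ⊓ u) (y ⊓ u) :=
      Relation.ReflTransGen.lift (· ⊓ u)
        (fun p q ⟨σ, hσ, hpq⟩ => ⟨σ, hσ, σ.inf_compat hpq (σ.iseqv.refl u)⟩) _ _ h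
    have l2 : Relation.ReflTransGen (chainStep a b) (y ⊓ u) (y ⊓ v) :=
      Relation.ReflTransGen.lift (y ⊓ ·)
        (fun p q ⟨σ, hσ, hpq⟩ => ⟨σ, hσ, σ.inf_compat (σ.iseqv.refl y) hpq⟩) _ _ h'
    exact l1.trans l2

theorem le_chainCon {a b : L} {σ : LatticeCongr L} (hσ : ¬ σ.r a b) : σ ≤ chainCon a b :=
  fun _ _ h => Relation.ReflTransGen.single ⟨σ, hσ, h⟩

/-- The chain congruence does not collapse the prime interval `(a, b)`. -/
theorem chainCon_not_rel {a b : L} (hab : a ⋖ b) : ¬ (chainCon a b).r a b := by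
  intro h
  have key : ∀ z, Relation.ReflTransGen (chainStep a b) a z → (z ⊔ a) ⊓ b = a := by
    intro z hz
    induction hz with
    | refl => simp [inf_eq_left.mpr hab.le]
    | tail hyz hstep ih =>
      rename_i y w
      obtain ⟨σ, hσ, hyw⟩ := hstep
      have hr : σ.r ((y ⊔ a) ⊓ b) ((w ⊔ a) ⊓ b) :=
        σ.inf_compat (σ.sup_compat hyw (σ.iseqv.refl a)) (σ.iseqv.refl b)
      rw [ih] at hr
      have hle1 : a ≤ (w ⊔ a) ⊓ b := le_inf le_sup_right hab.le
      have hle2 : (w ⊔ a) ⊓ b ≤ b := inf_le_right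
      rcases hab.eq_or_eq hle1 hle2 with h' | h'
      · exact h'
      · rw [h'] at hr; exact absurd hr hσ
  have := key b h
  have hb : (b ⊔ a) ⊓ b = b := by simp
  rw [hb] at this
  exact hab.ne' this

theorem conPair_rel_self (a b : L) : (conPair a b).r a b := fun _ hθ => hθ

theorem conPair_le {a b : L} {θ : LatticeCongr L} (h : θ.r a b) : conPair a b ≤ θ :=
  fun _ _ hr => hr θ h

end LatticeCongr

/-- For a dual atom `π` of `Con L` and prime intervals `p = [a, b]`, `q = [c, d]`
not collapsed by `π`, the principal congruences `con(p)` and `con(q)` are comparable. -/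
theorem coatom_prime_interval_congruences_comparable {L : Type*} [Lattice L] [Fintype L]
    (pi : LatticeCongr L) (hpi : IsCoatom pi)
    (a b c d : L) (hab : a ⋖ b) (hcd : c ⋖ d)
    (h1 : ¬ pi.r a b) (h2 : ¬ pi.r c d) :
    LatticeCongr.conPair a b ≤ LatticeCongr.conPair c d ∨
    LatticeCongr.conPair c d ≤ LatticeCongr.conPair a b := by
  right
  by_contra hle
  have hnr : ¬ (LatticeCongr.conPair a b).r c d := fun h => hle (LatticeCongr.conPair_le h)
  have h3 : LatticeCongr.conPair a b ≤ LatticeCongr.chainCon c d := LatticeCongr.le_chainCon hnr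
  have hpiJ : pi ≤ LatticeCongr.chainCon c d := LatticeCongr.le_chainCon h2
  have hJne : LatticeCongr.chainCon c d ≠ ⊤ :=
    fun h => LatticeCongr.chainCon_not_rel hcd (by rw [h]; trivial)
  have hJ : LatticeCongr.chainCon c d = pi := by
    rcases eq_or_lt_of_le hpiJ with h | h
    · exact h.symm
    · exact absurd (hpi.2 _ h) hJne
  exact h1 (hJ ▸ h3 (LatticeCongr.conPair_rel_self a b))
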